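/- Let g be an orientation-preserving C² diffeomorphism of [0,1] with no fixed point in (0,1). Then g² and g have the same centralizer in the group of orientation-preserving C² diffeomorphisms of [0,1]. -/

import Mathlib

/-- A model for an orientation-preserving C² diffeomorphism of [0,1]: a permutation of ℝ
that is the identity outside [0,1], restricting to a C² monotone bijection of [0,1] with
C² inverse. -/
def IsIccDiff (g : Equiv.Perm ℝ) : Prop :=
  ContDiffOn ℝ 2 ⇑g (Set.Icc 0 1) ∧ ContDiffOn ℝ 2 ⇑g.symm (Set.Icc 0 1) ∧
  Set.BijOn ⇑g (Set.Icc 0 1) (Set.Icc 0 1) ∧ StrictMonoOn ⇑g (Set.Icc 0 1) ∧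
  ∀ x : ℝ, x ∉ Set.Icc (0:ℝ) 1 → g x = x

open Set Filter Topology

local notation "I" => Set.Icc (0:ℝ) 1

lemma uI : UniqueDiffOn ℝ I := uniqueDiffOn_Icc one_pos

namespace IsIccDiff

variable {g h : Equiv.Perm ℝ}

lemma mapsTo (hg : IsIccDiff g) : Set.MapsTo ⇑g I I := hg.2.2.1.mapsTo

lemma fix0 (hg : IsIccDiff g) : g 0 = 0 := by
  obtain ⟨x, hx, hgx⟩ := hg.2.2.1.2.2 (show (0:ℝ) ∈ I by simp)
  rcases eq_or_lt_of_le hx.1 with h0 | h0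
  · rw [← h0] at hgx; exact hgx
  · have := hg.2.2.2.1 (by simp : (0:ℝ) ∈ I) hx h0
    rw [hgx] at this
    have h00 : (0:ℝ) ≤ g 0 := (hg.mapsTo (by simp)).1
    linarith

lemma fix1 (hg : IsIccDiff g) : g 1 = 1 := by
  obtain ⟨x, hx, hgx⟩ := hg.2.2.1.2.2 (show (1:ℝ) ∈ I by simp)
  rcases eq_or_lt_of_le hx.2 with h0 | h0
  · rw [h0] at hgx; exact hgx
  · have := hg.2.2.2.1 hx (by simp : (1:ℝ) ∈ I) h0
    rw [hgx] at this
    have h11 : g 1 ≤ 1 := (hg.mapsTo (by simp)).2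
    linarith

lemma inv (hg : IsIccDiff g) : IsIccDiff g⁻¹ := by
  have hinv : Set.InvOn ⇑g.symm ⇑g I I :=
    ⟨fun x _ => g.symm_apply_apply x, fun x _ => g.apply_symm_apply x⟩
  have hbij : Set.BijOn ⇑g.symm I I := Set.BijOn.symm hinv.symm hg.2.2.1
  refine ⟨hg.2.1, ?_, hbij, ?_, ?_⟩
  · show ContDiffOn ℝ 2 ⇑g.symm.symm I; simpa using hg.1
  · intro x hx y hy hxy
    rcases lt_trichotomy (g.symm x) (g.symm y) with h | h | h
    · exact h
    · exact absurd (by rw [← g.apply_symm_apply x, ← g.apply_symm_apply y, h]) hxy.ne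
    · have h2 := hg.2.2.2.1 (hbij.mapsTo hy) (hbij.mapsTo hx) h
      rw [g.apply_symm_apply, g.apply_symm_apply] at h2
      exact absurd hxy (not_lt.mpr h2.le)
  · intro x hx
    have hgx : g x = x := hg.2.2.2.2 x hx
    show g.symm x = x
    have h2 := g.symm_apply_apply x
    rw [hgx] at h2
    exact h2

lemma mul (hg : IsIccDiff g) (hh : IsIccDiff h) : IsIccDiff (g * h) := by
  have hco : ⇑(g * h) = ⇑g ∘ ⇑h := rfl
  refine ⟨?_, ?_, ?_, ?_, ?_⟩
  · rw [hco]; exact hg.1.comp hh.1 hh.mapsTo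
  · show ContDiffOn ℝ 2 (⇑h.symm ∘ ⇑g.symm) I
    have : ⇑g.symm = ⇑(g⁻¹) := rfl
    rw [this]
    exact hh.2.1.comp hg.inv.1 hg.inv.mapsTo
  · rw [hco]; exact hg.2.2.1.comp hh.2.2.1
  · rw [hco]
    intro x hx y hy hxy
    exact hg.2.2.2.1 (hh.mapsTo hx) (hh.mapsTo hy) (hh.2.2.2.1 hx hy hxy)
  · intro x hx
    show g (h x) = x
    rw [hh.2.2.2.2 x hx, hg.2.2.2.2 x hx]

lemma mapsToIoo (hg : IsIccDiff g) : Set.MapsTo ⇑g (Set.Ioo 0 1) (Set.Ioo 0 1) := by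
  intro x hx
  have h0 := hg.2.2.2.1 (by simp : (0:ℝ) ∈ I) (Set.mem_Icc_of_Ioo hx) hx.1
  have h1 := hg.2.2.2.1 (Set.mem_Icc_of_Ioo hx) (by simp : (1:ℝ) ∈ I) hx.2
  rw [hg.fix0] at h0; rw [hg.fix1] at h1
  exact ⟨h0, h1⟩

end IsIccDiff

section DerivMachinery

variable {φ ψ : ℝ → ℝ}

/-- interior differentiability -/
lemma hasDerivAt_of_Ioo (hφ : ContDiffOn ℝ 1 φ I) {x : ℝ} (hx : x ∈ Set.Ioo (0:ℝ) 1) :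
    HasDerivAt φ (derivWithin φ I x) x := by
  have hmem : I ∈ 𝓝 x := Icc_mem_nhds hx.1 hx.2
  have hd := (hφ.differentiableOn one_ne_zero x (Set.mem_Icc_of_Ioo hx)).differentiableAt hmem
  rw [derivWithin_of_mem_nhds hmem]
  exact hd.hasDerivAt

lemma hasDW (hφ : ContDiffOn ℝ 1 φ I) {x : ℝ} (hx : x ∈ I) :
    HasDerivWithinAt φ (derivWithin φ I x) I x :=
  (hφ.differentiableOn one_ne_zero x hx).hasDerivWithinAt

/-- MVT: there is a point in (u,v) where derivWithin equals the slope. -/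
lemma exists_derivWithin_slope (hφ : ContDiffOn ℝ 1 φ I) {u v : ℝ}
    (huv : u < v) (hu : (0:ℝ) ≤ u) (hv : v ≤ 1) :
    ∃ ξ ∈ Set.Ioo u v, derivWithin φ I ξ = (φ v - φ u) / (v - u) := by
  have hsub : Set.Icc u v ⊆ I := Set.Icc_subset_Icc hu hv
  have hcont : ContinuousOn φ (Set.Icc u v) := hφ.continuousOn.mono hsub
  have hder : ∀ x ∈ Set.Ioo u v, HasDerivAt φ (derivWithin φ I x) x := by
    intro x hx
    exact hasDerivAt_of_Ioo hφ ⟨lt_of_le_of_lt hu hx.1, lt_of_lt_of_le hx.2 hv⟩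
  exact exists_hasDerivAt_eq_slope φ _ huv hcont hder

end DerivMachinery

namespace IsIccDiff

variable {g : Equiv.Perm ℝ}

/-- the within-derivative of an IsIccDiff perm is positive on I -/
lemma derivWithin_pos (hg : IsIccDiff g) : ∀ x ∈ I, 0 < derivWithin ⇑g I x := by
  have hg1 : ContDiffOn ℝ 1 ⇑g I := hg.1.of_le one_le_two
  have hgs1 : ContDiffOn ℝ 1 ⇑g.symm I := hg.2.1.of_le one_le_two
  -- never zero
  have hne : ∀ x ∈ I, derivWithin ⇑g I x ≠ 0 := by
    intro x hx h0
    have hcomp : HasDerivWithinAt (⇑g.symm ∘ ⇑g)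
        (derivWithin ⇑g.symm I (g x) * derivWithin ⇑g I x) I x :=
      (hasDW hgs1 (hg.mapsTo hx)).comp x (hasDW hg1 hx) hg.mapsTo
    have hid : (⇑g.symm ∘ ⇑g) = id := by
      funext y; exact g.symm_apply_apply y
    rw [hid] at hcomp
    have h1 : derivWithin (id : ℝ → ℝ) I x = 1 := derivWithin_id x I (uI x hx)
    have := hcomp.derivWithin (uI x hx)
    rw [h1] at this
    rw [h0, mul_zero] at this
    norm_num at this
  -- somewhere equal to 1
  obtain ⟨ξ, hξ, hξ1⟩ := exists_derivWithin_slope hg1 one_pos le_rfl le_rfl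
  rw [hg.fix0, hg.fix1] at hξ1
  norm_num at hξ1
  -- continuity of the derivative
  have hcont : ContinuousOn (derivWithin ⇑g I) I :=
    hg1.continuousOn_derivWithin uI le_rfl
  intro x hx
  rcases lt_or_gt_of_ne (hne x hx) with hneg | hpos
  · exfalso
    have hξI : ξ ∈ I := Set.mem_Icc_of_Ioo hξ
    have hsub : Set.uIcc x ξ ⊆ I := Set.uIcc_subset_Icc hx hξI
    have h0mem : (0:ℝ) ∈ Set.uIcc (derivWithin ⇑g I x) (derivWithin ⇑g I ξ) := by
      rw [hξ1]
      exact Set.mem_uIcc.2 (Or.inl ⟨hneg.le, zero_le_one⟩)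
    obtain ⟨z, hz, hz0⟩ := intermediate_value_uIcc (hcont.mono hsub) h0mem
    exact hne z (hsub hz) hz0
  · exact hpos

end IsIccDiff

namespace IsIccDiff

variable {g : Equiv.Perm ℝ}

lemma iter_mapsTo (hg : IsIccDiff g) (m : ℕ) : Set.MapsTo (⇑g)^[m] I I :=
  hg.mapsTo.iterate m

lemma iter_contDiffOn (hg : IsIccDiff g) (m : ℕ) : ContDiffOn ℝ 1 ((⇑g)^[m]) I := by
  induction m with
  | zero => simpa using contDiffOn_id
  | succ m ih =>
    rw [Function.iterate_succ']
    exact (hg.1.of_le one_le_two).comp ih (hg.iter_mapsTo m)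

lemma iter_strictMonoOn (hg : IsIccDiff g) (m : ℕ) : StrictMonoOn ((⇑g)^[m]) I := by
  induction m with
  | zero => simpa using strictMonoOn_id
  | succ m ih =>
    rw [Function.iterate_succ']
    intro x hx y hy hxy
    exact hg.2.2.2.1 (hg.iter_mapsTo m hx) (hg.iter_mapsTo m hy) (ih hx hy hxy)

lemma iter_monotoneOn (hg : IsIccDiff g) (m : ℕ) : MonotoneOn ((⇑g)^[m]) I :=
  (hg.iter_strictMonoOn m).monotoneOn

lemma iter_hasDW (hg : IsIccDiff g) (m : ℕ) {x : ℝ} (hx : x ∈ I) :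
    HasDerivWithinAt ((⇑g)^[m])
      (∏ k ∈ Finset.range m, derivWithin ⇑g I ((⇑g)^[k] x)) I x := by
  induction m with
  | zero => simpa using (hasDerivWithinAt_id x I)
  | succ m ih =>
    rw [Function.iterate_succ']
    have h1 : HasDerivWithinAt ⇑g (derivWithin ⇑g I ((⇑g)^[m] x)) I ((⇑g)^[m] x) :=
      hasDW (hg.1.of_le one_le_two) (hg.iter_mapsTo m hx)
    have := h1.comp x ih (hg.iter_mapsTo m)
    rw [Finset.prod_range_succ]
    rw [mul_comm]
    exact this

lemma iter_derivWithin (hg : IsIccDiff g) (m : ℕ) {x : ℝ} (hx : x ∈ I) :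
    derivWithin ((⇑g)^[m]) I x
      = ∏ k ∈ Finset.range m, derivWithin ⇑g I ((⇑g)^[k] x) :=
  (hg.iter_hasDW m hx).derivWithin (uI x hx)

lemma iter_derivWithin_pos (hg : IsIccDiff g) (m : ℕ) {x : ℝ} (hx : x ∈ I) :
    0 < derivWithin ((⇑g)^[m]) I x := by
  rw [hg.iter_derivWithin m hx]
  exact Finset.prod_pos fun k _ => hg.derivWithin_pos _ (hg.iter_mapsTo k hx)

end IsIccDiff

namespace IsIccDiff

variable {g : Equiv.Perm ℝ}

lemma iter_mapsToIoo (hg : IsIccDiff g) (m : ℕ) :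
    Set.MapsTo ((⇑g)^[m]) (Set.Ioo 0 1) (Set.Ioo 0 1) :=
  hg.mapsToIoo.iterate m

lemma tendsto_iter_zero (hg : IsIccDiff g) (hlt : ∀ x ∈ Set.Ioo (0:ℝ) 1, g x < x)
    {x : ℝ} (hx : x ∈ Set.Ioo (0:ℝ) 1) :
    Filter.Tendsto (fun k => (⇑g)^[k] x) Filter.atTop (𝓝 0) := by
  set s : ℕ → ℝ := fun k => (⇑g)^[k] x with hs
  have hmem : ∀ k, s k ∈ Set.Ioo (0:ℝ) 1 := fun k => hg.iter_mapsToIoo k hx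
  have hanti : Antitone s := by
    apply antitone_nat_of_succ_le
    intro k
    have := hlt _ (hmem k)
    rw [← Function.iterate_succ_apply' (⇑g) k x] at this
    exact this.le
  have hbdd : BddBelow (Set.range s) := ⟨0, fun y ⟨k, hk⟩ => hk ▸ (hmem k).1.le⟩
  have htend := tendsto_atTop_ciInf hanti hbdd
  set c := ⨅ k, s k with hc
  have hc0 : 0 ≤ c := le_ciInf fun k => (hmem k).1.le
  have hc1 : c < 1 := lt_of_le_of_lt (ciInf_le hbdd 0) (hmem 0).2
  rcases eq_or_lt_of_le hc0 with h | h
  · rwa [← h] at htend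
  · exfalso
    have hcI : c ∈ Set.Ioo (0:ℝ) 1 := ⟨h, hc1⟩
    have hcont : ContinuousAt ⇑g c :=
      (hg.1.continuousOn.continuousAt (Icc_mem_nhds hcI.1 hcI.2))
    have h1 : Filter.Tendsto (fun k => g (s k)) Filter.atTop (𝓝 (g c)) :=
      hcont.tendsto.comp htend
    have h2 : Filter.Tendsto (fun k => s (k + 1)) Filter.atTop (𝓝 c) :=
      (Filter.tendsto_add_atTop_iff_nat 1).mpr htend
    have heq : (fun k => g (s k)) = fun k => s (k + 1) := by
      funext k
      exact (Function.iterate_succ_apply' (⇑g) k x).symm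
    rw [heq] at h1
    have : g c = c := tendsto_nhds_unique h1 h2
    exact absurd this (ne_of_lt (hlt c hcI))

lemma tendsto_iter_one (hg : IsIccDiff g) (hgt : ∀ x ∈ Set.Ioo (0:ℝ) 1, x < g x)
    {x : ℝ} (hx : x ∈ Set.Ioo (0:ℝ) 1) :
    Filter.Tendsto (fun k => (⇑g)^[k] x) Filter.atTop (𝓝 1) := by
  set s : ℕ → ℝ := fun k => (⇑g)^[k] x with hs
  have hmem : ∀ k, s k ∈ Set.Ioo (0:ℝ) 1 := fun k => hg.iter_mapsToIoo k hx
  have hmono : Monotone s := by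
    apply monotone_nat_of_le_succ
    intro k
    have := hgt _ (hmem k)
    rw [← Function.iterate_succ_apply' (⇑g) k x] at this
    exact this.le
  have hbdd : BddAbove (Set.range s) := ⟨1, fun y ⟨k, hk⟩ => hk ▸ (hmem k).2.le⟩
  have htend := tendsto_atTop_ciSup hmono hbdd
  set c := ⨆ k, s k with hc
  have hc1 : c ≤ 1 := ciSup_le fun k => (hmem k).2.le
  have hc0 : 0 < c := lt_of_lt_of_le (hmem 0).1 (le_ciSup hbdd 0)
  rcases eq_or_lt_of_le hc1 with h | h
  · rwa [h] at htend
  · exfalso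
    have hcI : c ∈ Set.Ioo (0:ℝ) 1 := ⟨hc0, h⟩
    have hcont : ContinuousAt ⇑g c :=
      (hg.1.continuousOn.continuousAt (Icc_mem_nhds hcI.1 hcI.2))
    have h1 : Filter.Tendsto (fun k => g (s k)) Filter.atTop (𝓝 (g c)) :=
      hcont.tendsto.comp htend
    have h2 : Filter.Tendsto (fun k => s (k + 1)) Filter.atTop (𝓝 c) :=
      (Filter.tendsto_add_atTop_iff_nat 1).mpr htend
    have heq : (fun k => g (s k)) = fun k => s (k + 1) := by
      funext k
      exact (Function.iterate_succ_apply' (⇑g) k x).symm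
    rw [heq] at h1
    have : g c = c := tendsto_nhds_unique h1 h2
    exact absurd this (ne_of_gt (hgt c hcI))

end IsIccDiff

lemma kopell_core (G F : Equiv.Perm ℝ) (hG : IsIccDiff G) (hF : IsIccDiff F)
    (hGlt : ∀ x ∈ Set.Ioo (0:ℝ) 1, G x < x)
    (hcomm : ∀ x : ℝ, G (F x) = F (G x))
    {a : ℝ} (ha : a ∈ Set.Ioo (0:ℝ) 1) (hFa : F a = a)
    {x₀ : ℝ} (hx₀ : x₀ ∈ Set.Icc (G a) a) (hgt : x₀ < F x₀) : False := by
  have haI : a ∈ I := Set.mem_Icc_of_Ioo ha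
  have hGa : G a ∈ Set.Ioo (0:ℝ) 1 := hG.mapsToIoo ha
  have hGa_lt : G a < a := hGlt a ha
  have hI₀Ioo : Set.Icc (G a) a ⊆ Set.Ioo (0:ℝ) 1 := fun z hz =>
    ⟨lt_of_lt_of_le hGa.1 hz.1, lt_of_le_of_lt hz.2 ha.2⟩
  have hI₀I : Set.Icc (G a) a ⊆ I := fun z hz => Set.mem_Icc_of_Ioo (hI₀Ioo hz)
  set DG := derivWithin ⇑G I with hDG
  set seq : ℕ → ℝ := fun k => (⇑G)^[k] a with hseq
  have hseqIoo : ∀ k, seq k ∈ Set.Ioo (0:ℝ) 1 := fun k => hG.iter_mapsToIoo k ha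
  have hseqI : ∀ k, seq k ∈ I := fun k => Set.mem_Icc_of_Ioo (hseqIoo k)
  have hseq_succ : ∀ k, seq (k + 1) = G (seq k) := fun k =>
    Function.iterate_succ_apply' (⇑G) k a
  have hseq_succ' : ∀ k, seq (k + 1) = (⇑G)^[k] (G a) := fun k =>
    Function.iterate_succ_apply (⇑G) k a
  have hseq_dec : ∀ k, seq (k + 1) < seq k := by
    intro k; rw [hseq_succ k]; exact hGlt _ (hseqIoo k)
  -- the fundamental domain bounds
  have horb : ∀ k, ∀ z ∈ Set.Icc (G a) a,
      (⇑G)^[k] z ∈ Set.Icc (seq (k + 1)) (seq k) := by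
    intro k z hz
    constructor
    · rw [hseq_succ']
      exact hG.iter_monotoneOn k (hI₀I ⟨le_rfl, hGa_lt.le⟩) (hI₀I hz) hz.1
    · exact hG.iter_monotoneOn k (hI₀I hz) haI hz.2
  -- derivative: min and Lipschitz bound
  have hG1 : ContDiffOn ℝ 1 ⇑G I := hG.1.of_le one_le_two
  have hcontDG : ContinuousOn DG I := hG1.continuousOn_derivWithin uI le_rfl
  obtain ⟨xm, hxmI, hxmin⟩ :=
    isCompact_Icc.exists_isMinOn (Set.nonempty_Icc.2 zero_le_one) hcontDG
  set μ := DG xm with hμ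
  have hμpos : 0 < μ := hG.derivWithin_pos xm hxmI
  have hμle : ∀ y ∈ I, μ ≤ DG y := fun y hy => hxmin hy
  have hDG1 : ContDiffOn ℝ 1 DG I := hG.1.derivWithin uI (by norm_num)
  have hcontDDG : ContinuousOn (derivWithin DG I) I :=
    hDG1.continuousOn_derivWithin uI le_rfl
  obtain ⟨K, hKbound⟩ := isCompact_Icc.exists_bound_of_continuousOn hcontDDG
  have hK0 : 0 ≤ K := le_trans (norm_nonneg _) (hKbound 0 (by simp))
  have hlip : ∀ u ∈ I, ∀ v ∈ I, |DG u - DG v| ≤ K * |u - v| := by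
    intro u hu v hv
    have := (convex_Icc (0:ℝ) 1).norm_image_sub_le_of_norm_derivWithin_le
      (hDG1.differentiableOn one_ne_zero) hKbound hv hu
    simpa [Real.norm_eq_abs] using this
  set C := Real.exp (K / μ) with hC
  have hCpos : 0 < C := Real.exp_pos _
  have hratio : ∀ u ∈ I, ∀ v ∈ I, DG u ≤ DG v * Real.exp (K / μ * |u - v|) := by
    intro u hu v hv
    have h1 : DG u - DG v ≤ K * |u - v| := le_trans (le_abs_self _) (hlip u hu v hv)
    have h2 : K * |u - v| ≤ DG v * (K / μ * |u - v|) := by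
      have hv' := hμle v hv
      have habs : (0:ℝ) ≤ |u - v| := abs_nonneg _
      have : K * |u - v| = μ * (K / μ * |u - v|) := by
        field_simp
      rw [this]
      apply mul_le_mul_of_nonneg_right hv'
      positivity
    have h3 : 1 + K / μ * |u - v| ≤ Real.exp (K / μ * |u - v|) := by
      have := Real.add_one_le_exp (K / μ * |u - v|)
      linarith
    have hDGv : 0 < DG v := hG.derivWithin_pos v hv
    nlinarith [mul_le_mul_of_nonneg_left h3 hDGv.le]
  -- the distortion bound for products
  set P : ℕ → ℝ → ℝ := fun n x => ∏ k ∈ Finset.range n, DG ((⇑G)^[k] x) with hP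
  have hPpos : ∀ n, ∀ x ∈ I, 0 < P n x := fun n x hx =>
    Finset.prod_pos fun k _ => hG.derivWithin_pos _ (hG.iter_mapsTo k hx)
  have hprod : ∀ n, ∀ x ∈ Set.Icc (G a) a, ∀ y ∈ Set.Icc (G a) a,
      P n x ≤ C * P n y := by
    intro n x hx y hy
    have hterm : ∀ k ∈ Finset.range n,
        DG ((⇑G)^[k] x) ≤ DG ((⇑G)^[k] y) * Real.exp (K / μ * (seq k - seq (k + 1))) := by
      intro k _
      have hxk := horb k x hx
      have hyk := horb k y hy
      have habs : |(⇑G)^[k] x - (⇑G)^[k] y| ≤ seq k - seq (k + 1) := by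
        rw [abs_le]
        constructor <;> [linarith [hxk.1, hyk.2]; linarith [hxk.2, hyk.1]]
      calc DG ((⇑G)^[k] x)
          ≤ DG ((⇑G)^[k] y) * Real.exp (K / μ * |(⇑G)^[k] x - (⇑G)^[k] y|) :=
            hratio _ (hG.iter_mapsTo k (hI₀I hx)) _ (hG.iter_mapsTo k (hI₀I hy))
        _ ≤ DG ((⇑G)^[k] y) * Real.exp (K / μ * (seq k - seq (k + 1))) := by
            apply mul_le_mul_of_nonneg_left _ (hG.derivWithin_pos _ (hG.iter_mapsTo k (hI₀I hy))).le
            apply Real.exp_le_exp.2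
            apply mul_le_mul_of_nonneg_left habs
            positivity
    have h1 : P n x ≤ ∏ k ∈ Finset.range n,
        (DG ((⇑G)^[k] y) * Real.exp (K / μ * (seq k - seq (k + 1)))) := by
      apply Finset.prod_le_prod
      · intro k _; exact (hG.derivWithin_pos _ (hG.iter_mapsTo k (hI₀I hx))).le
      · exact hterm
    rw [Finset.prod_mul_distrib, ← Real.exp_sum] at h1
    have hsum : ∑ k ∈ Finset.range n, K / μ * (seq k - seq (k + 1)) ≤ K / μ := by
      rw [← Finset.mul_sum]
      have htel : ∑ k ∈ Finset.range n, (seq k - seq (k + 1)) = seq 0 - seq n :=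
        Finset.sum_range_sub' seq n
      rw [htel]
      have h0 : seq 0 = a := rfl
      have : seq 0 - seq n ≤ 1 := by
        have := (hseqIoo n).1
        rw [h0]
        linarith [ha.2]
      calc K / μ * (seq 0 - seq n) ≤ K / μ * 1 := by
            apply mul_le_mul_of_nonneg_left this; positivity
        _ = K / μ := mul_one _
    calc P n x ≤ P n y * Real.exp (∑ k ∈ Finset.range n, K / μ * (seq k - seq (k + 1))) := h1
      _ ≤ P n y * C := by
          apply mul_le_mul_of_nonneg_left _ (hPpos n y (hI₀I hy)).le
          exact Real.exp_le_exp.2 hsum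
      _ = C * P n y := mul_comm _ _
  -- F-side facts
  have hcommG : ∀ n, ∀ z : ℝ, F ((⇑G)^[n] z) = (⇑G)^[n] (F z) := by
    intro n
    induction n with
    | zero => intro z; simp
    | succ n ih =>
      intro z
      rw [Function.iterate_succ_apply', Function.iterate_succ_apply', ← hcomm, ih]
  have hcommFm : ∀ m n, ∀ z : ℝ, (⇑F)^[m] ((⇑G)^[n] z) = (⇑G)^[n] ((⇑F)^[m] z) := by
    intro m
    induction m with
    | zero => intro n z; simp
    | succ m ih =>
      intro n z
      rw [Function.iterate_succ_apply, Function.iterate_succ_apply, hcommG, ih]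
  have hFseq : ∀ k, F (seq k) = seq k := by
    intro k
    show F ((⇑G)^[k] a) = seq k
    rw [hcommG, hFa]
  have hFmseq : ∀ m k, (⇑F)^[m] (seq k) = seq k := fun m k =>
    Function.iterate_fixed (hFseq k) m
  have hseq0 : seq 0 = a := rfl
  have hseq1 : seq 1 = G a := by simp [hseq]
  have hFm_maps : ∀ m, Set.MapsTo ((⇑F)^[m]) (Set.Icc (G a) a) (Set.Icc (G a) a) := by
    intro m z hz
    constructor
    · have h1 := hF.iter_monotoneOn m (hI₀I (Set.left_mem_Icc.2 hGa_lt.le)) (hI₀I hz) hz.1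
      rw [show (G a) = seq 1 from hseq1.symm, hFmseq m 1, hseq1] at h1
      exact h1
    · have h1 := hF.iter_monotoneOn m (hI₀I hz) haI hz.2
      rw [show a = seq 0 from rfl, hFmseq m 0] at h1
      exact h1
  -- derivative of F at 0 equals 1
  have hF1 : ContDiffOn ℝ 1 ⇑F I := hF.1.of_le one_le_two
  have hcontDF : ContinuousOn (derivWithin ⇑F I) I := hF1.continuousOn_derivWithin uI le_rfl
  have htend0a : Filter.Tendsto seq Filter.atTop (𝓝 0) := hG.tendsto_iter_zero hGlt ha
  have hDF0 : derivWithin ⇑F I 0 = 1 := by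
    have hsl : ∀ n : ℕ, ∃ ξ ∈ Set.Ioo (seq (n+1)) (seq n), derivWithin ⇑F I ξ = 1 := by
      intro n
      obtain ⟨ξ, hξ, hv⟩ := exists_derivWithin_slope hF1 (hseq_dec n)
        (hseqIoo (n+1)).1.le (hseqIoo n).2.le
      refine ⟨ξ, hξ, ?_⟩
      rw [hFseq, hFseq] at hv
      rw [hv, div_self (sub_ne_zero.2 (hseq_dec n).ne')]
    choose ξ hξmem hξval using hsl
    have hξI : ∀ n, ξ n ∈ I := fun n => Set.mem_Icc_of_Ioo
      ⟨lt_trans (hseqIoo (n+1)).1 (hξmem n).1, lt_trans (hξmem n).2 (hseqIoo n).2⟩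
    have hξtend : Filter.Tendsto ξ Filter.atTop (𝓝 0) := by
      have h1 : Filter.Tendsto (fun n => seq (n+1)) Filter.atTop (𝓝 0) :=
        (Filter.tendsto_add_atTop_iff_nat 1).mpr htend0a
      exact tendsto_of_tendsto_of_tendsto_of_le_of_le h1 htend0a
        (fun n => (hξmem n).1.le) (fun n => (hξmem n).2.le)
    have hc : Filter.Tendsto (fun n => derivWithin ⇑F I (ξ n)) Filter.atTop
        (𝓝 (derivWithin ⇑F I 0)) :=
      ((hcontDF 0 (by simp)).tendsto).comp
        (tendsto_nhdsWithin_of_tendsto_nhds_of_eventually_within _ hξtend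
          (Filter.Eventually.of_forall hξI))
    have hc1 : Filter.Tendsto (fun n => derivWithin ⇑F I (ξ n)) Filter.atTop (𝓝 1) := by
      simp only [hξval]
      exact tendsto_const_nhds
    exact (tendsto_nhds_unique hc hc1)
  have hDφ0 : ∀ m, derivWithin ((⇑F)^[m]) I 0 = 1 := by
    intro m
    rw [hF.iter_derivWithin m (by simp : (0:ℝ) ∈ I)]
    apply Finset.prod_eq_one
    intro k _
    rw [Function.iterate_fixed hF.fix0 k, hDF0]
  -- uniform lower bound for derivatives of iterates of F on the fundamental domain
  have hlow : ∀ m, ∀ x ∈ Set.Icc (G a) a, 1 / C ≤ derivWithin ((⇑F)^[m]) I x := by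
    intro m x hx
    set φ := (⇑F)^[m] with hφ
    have hφ1 : ContDiffOn ℝ 1 φ I := hF.iter_contDiffOn m
    have hxI := hI₀I hx
    have hφx : φ x ∈ Set.Icc (G a) a := hFm_maps m hx
    have key : ∀ n : ℕ, derivWithin φ I ((⇑G)^[n] x) ≤ C * derivWithin φ I x := by
      intro n
      have h1 : HasDerivWithinAt (φ ∘ (⇑G)^[n])
          (derivWithin φ I ((⇑G)^[n] x) * P n x) I x :=
        (hasDW hφ1 (hG.iter_mapsTo n hxI)).comp x (hG.iter_hasDW n hxI) (hG.iter_mapsTo n)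
      have h2 : HasDerivWithinAt ((⇑G)^[n] ∘ φ) (P n (φ x) * derivWithin φ I x) I x :=
        (hG.iter_hasDW n (hI₀I hφx)).comp x (hasDW hφ1 hxI) (hF.iter_mapsTo m)
      have hfun : φ ∘ (⇑G)^[n] = (⇑G)^[n] ∘ φ := funext fun z => hcommFm m n z
      rw [hfun] at h1
      have heq := (h1.derivWithin (uI x hxI)).symm.trans (h2.derivWithin (uI x hxI))
      have hPx := hPpos n x hxI
      have hφpos : (0:ℝ) ≤ derivWithin φ I x := (hF.iter_derivWithin_pos m hxI).le
      have hPle := hprod n (φ x) hφx x hx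
      have h3 : P n (φ x) * derivWithin φ I x ≤ C * P n x * derivWithin φ I x :=
        mul_le_mul_of_nonneg_right hPle hφpos
      rw [← heq] at h3
      have h4 : derivWithin φ I ((⇑G)^[n] x) * P n x ≤ (C * derivWithin φ I x) * P n x := by
        calc derivWithin φ I ((⇑G)^[n] x) * P n x ≤ C * P n x * derivWithin φ I x := h3
          _ = (C * derivWithin φ I x) * P n x := by ring
      exact le_of_mul_le_mul_right h4 hPx
    have htend : Filter.Tendsto (fun n => derivWithin φ I ((⇑G)^[n] x)) Filter.atTop (𝓝 1) := by
      have h0 : Filter.Tendsto (fun n => (⇑G)^[n] x) Filter.atTop (𝓝 0) :=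
        hG.tendsto_iter_zero hGlt (hI₀Ioo hx)
      have hcφ : ContinuousOn (derivWithin φ I) I := hφ1.continuousOn_derivWithin uI le_rfl
      have := ((hcφ 0 (by simp)).tendsto).comp
        (tendsto_nhdsWithin_of_tendsto_nhds_of_eventually_within _ h0
          (Filter.Eventually.of_forall fun n => hG.iter_mapsTo n hxI))
      rwa [hDφ0 m] at this
    have h1C : (1:ℝ) ≤ C * derivWithin φ I x :=
      le_of_tendsto htend (Filter.Eventually.of_forall key)
    rw [div_le_iff₀ hCpos, mul_comm]
    exact h1C
  -- final contradiction via the orbit of x₀ under F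
  set s : ℕ → ℝ := fun m => (⇑F)^[m] x₀ with hsdef
  have hsI₀ : ∀ m, s m ∈ Set.Icc (G a) a := fun m => hFm_maps m hx₀
  have hs_succ : ∀ m, s (m+1) = (⇑F)^[m] (F x₀) := fun m => Function.iterate_succ_apply ⇑F m x₀
  have hFx₀ : F x₀ ∈ Set.Icc (G a) a := by
    have := hsI₀ 1
    simpa [hsdef] using this
  have hs_mono : ∀ m, s m < s (m+1) := by
    intro m
    rw [hs_succ]
    exact hF.iter_strictMonoOn m (hI₀I hx₀) (hI₀I hFx₀) hgt
  have hmono : Monotone s := monotone_nat_of_le_succ fun m => (hs_mono m).le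
  have hbdd : BddAbove (Set.range s) := ⟨a, fun y ⟨m, hm⟩ => hm ▸ (hsI₀ m).2⟩
  have hconv := tendsto_atTop_ciSup hmono hbdd
  have hdiff0 : Filter.Tendsto (fun m => s (m+1) - s m) Filter.atTop (𝓝 0) := by
    have h2 := (Filter.tendsto_add_atTop_iff_nat 1).mpr hconv
    have := h2.sub hconv
    simpa using this
  have hδpos : 0 < (1 / C) * (F x₀ - x₀) := by
    have := sub_pos.2 hgt
    positivity
  have hlower : ∀ m, (1 / C) * (F x₀ - x₀) ≤ s (m+1) - s m := by
    intro m
    obtain ⟨ξ, hξmem, hξval⟩ := exists_derivWithin_slope (hF.iter_contDiffOn m) hgt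
      (hI₀I hx₀).1 (hI₀I hFx₀).2
    have hξI₀ : ξ ∈ Set.Icc (G a) a :=
      ⟨le_trans hx₀.1 hξmem.1.le, le_trans hξmem.2.le hFx₀.2⟩
    have hlow' := hlow m ξ hξI₀
    rw [hξval] at hlow'
    have hpos : 0 < F x₀ - x₀ := sub_pos.2 hgt
    rw [le_div_iff₀ hpos] at hlow'
    rw [hs_succ]
    exact hlow'
  have hev : ∀ᶠ m in Filter.atTop, s (m+1) - s m < (1 / C) * (F x₀ - x₀) :=
    hdiff0.eventually_lt_const hδpos
  obtain ⟨m, hm⟩ := hev.exists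
  linarith [hlower m]

lemma kopell (G F : Equiv.Perm ℝ) (hG : IsIccDiff G) (hF : IsIccDiff F)
    (hGlt : ∀ x ∈ Set.Ioo (0:ℝ) 1, G x < x)
    (hcomm : ∀ x : ℝ, G (F x) = F (G x))
    {a : ℝ} (ha : a ∈ Set.Ioo (0:ℝ) 1) (hFa : F a = a) :
    ∀ y : ℝ, F y = y := by
  have haI : a ∈ I := Set.mem_Icc_of_Ioo ha
  have hGa : G a ∈ Set.Ioo (0:ℝ) 1 := hG.mapsToIoo ha
  have hGa_lt : G a < a := hGlt a ha
  have hI₀I : Set.Icc (G a) a ⊆ I := fun z hz =>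
    ⟨le_trans hGa.1.le hz.1, le_trans hz.2 ha.2.le⟩
  have hFGa : F (G a) = G a := by rw [← hcomm, hFa]
  -- F maps the fundamental domain into itself
  have hFI₀ : Set.MapsTo ⇑F (Set.Icc (G a) a) (Set.Icc (G a) a) := by
    intro z hz
    constructor
    · have := hF.2.2.2.1.monotoneOn (hI₀I (Set.left_mem_Icc.2 hGa_lt.le)) (hI₀I hz) hz.1
      rwa [hFGa] at this
    · have := hF.2.2.2.1.monotoneOn (hI₀I hz) haI hz.2
      rwa [hFa] at this
  have hcomm' : ∀ x : ℝ, G (F.symm x) = F.symm (G x) := by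
    intro x
    have h1 := hcomm (F.symm x)
    rw [F.apply_symm_apply] at h1
    calc G (F.symm x) = F.symm (F (G (F.symm x))) := (F.symm_apply_apply _).symm
      _ = F.symm (G x) := by rw [← h1]
  -- identity on the fundamental domain
  have hfix : ∀ x ∈ Set.Icc (G a) a, F x = x := by
    intro x hx
    rcases lt_trichotomy (F x) x with hlt | heq | hgt
    · exfalso
      have hFinv : IsIccDiff F⁻¹ := hF.inv
      have hFsa : F⁻¹ a = a := by
        show F.symm a = a
        have h0 := F.symm_apply_apply a
        rwa [hFa] at h0
      have hFxI₀ : F x ∈ Set.Icc (G a) a := hFI₀ hx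
      have hgt' : F x < F⁻¹ (F x) := by
        show F x < F.symm (F x)
        rwa [F.symm_apply_apply]
      exact kopell_core G F⁻¹ hG hFinv hGlt hcomm' ha hFsa hFxI₀ hgt'
    · exact heq
    · exact absurd (kopell_core G F hG hF hGlt hcomm ha hFa hx hgt) id
  -- downward extension
  have hu_Ioo : ∀ j, (⇑G)^[j] (G a) ∈ Set.Ioo (0:ℝ) 1 := fun j => hG.iter_mapsToIoo j hGa
  have hu_le : ∀ j, (⇑G)^[j] (G a) ≤ G a := by
    intro j
    induction j with
    | zero => simp
    | succ j ih =>
      rw [Function.iterate_succ_apply']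
      exact le_trans (hGlt _ (hu_Ioo j)).le ih
  have hdown : ∀ j, ∀ y, (⇑G)^[j] (G a) ≤ y → y ≤ a → F y = y := by
    intro j
    induction j with
    | zero => intro y h1 h2; exact hfix y ⟨by simpa using h1, h2⟩
    | succ j ih =>
      intro y h1 h2
      by_cases hy : (⇑G)^[j] (G a) ≤ y
      · exact ih y hy h2
      · push_neg at hy
        have hyI : y ∈ I := ⟨le_trans (hu_Ioo (j+1)).1.le h1, le_trans h2 ha.2.le⟩
        set z := G.symm y with hz
        have hzI : z ∈ I := hG.inv.mapsTo hyI
        have hGz : G z = y := G.apply_symm_apply y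
        have hujI : (⇑G)^[j] (G a) ∈ I := Set.mem_Icc_of_Ioo (hu_Ioo j)
        have hz1 : (⇑G)^[j] (G a) ≤ z := by
          have h3 : G ((⇑G)^[j] (G a)) ≤ G z := by
            rw [hGz, ← Function.iterate_succ_apply' (⇑G) j (G a)]
            exact h1
          exact ((hG.2.2.2.1.le_iff_le hujI hzI).mp h3)
        have hz2 : z ≤ a := by
          have h3 : G z ≤ G a := by
            rw [hGz]
            exact le_trans hy.le (hu_le j)
          exact (hG.2.2.2.1.le_iff_le hzI haI).mp h3
        have hFz : F z = z := ih z hz1 hz2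
        calc F y = F (G z) := by rw [hGz]
          _ = G (F z) := (hcomm z).symm
          _ = G z := by rw [hFz]
          _ = y := hGz
  -- upward extension
  have hGgt : ∀ x ∈ Set.Ioo (0:ℝ) 1, x < G.symm x := by
    intro x hx
    have hsx : G.symm x ∈ Set.Ioo (0:ℝ) 1 := hG.inv.mapsToIoo hx
    have := hGlt _ hsx
    rwa [G.apply_symm_apply] at this
  have hv_Ioo : ∀ k, (⇑G.symm)^[k] a ∈ Set.Ioo (0:ℝ) 1 := fun k =>
    hG.inv.iter_mapsToIoo k ha
  have hv_ge : ∀ k, a ≤ (⇑G.symm)^[k] a := by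
    intro k
    induction k with
    | zero => simp
    | succ k ih =>
      rw [Function.iterate_succ_apply']
      exact le_trans ih (hGgt _ (hv_Ioo k)).le
  have hup : ∀ k, ∀ y, G a ≤ y → y ≤ (⇑G.symm)^[k] a → F y = y := by
    intro k
    induction k with
    | zero => intro y h1 h2; exact hfix y ⟨h1, by simpa using h2⟩
    | succ k ih =>
      intro y h1 h2
      by_cases hy : y ≤ (⇑G.symm)^[k] a
      · exact ih y h1 hy
      · push_neg at hy
        have hyI : y ∈ I := ⟨le_trans hGa.1.le h1, le_trans h2 (hv_Ioo (k+1)).2.le⟩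
        have hvkI : (⇑G.symm)^[k] a ∈ I := Set.mem_Icc_of_Ioo (hv_Ioo k)
        have hvk1I : (⇑G.symm)^[k+1] a ∈ I := Set.mem_Icc_of_Ioo (hv_Ioo (k+1))
        set z := G y with hz
        have hzI : z ∈ I := hG.mapsTo hyI
        have hz1 : G a ≤ z := by
          apply hG.2.2.2.1.monotoneOn haI hyI
          exact le_trans (hv_ge k) hy.le
        have hz2 : z ≤ (⇑G.symm)^[k] a := by
          have h3 : y ≤ G.symm ((⇑G.symm)^[k] a) := by
            rw [← Function.iterate_succ_apply' (⇑G.symm) k a]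
            exact h2
          have h4 := hG.2.2.2.1.monotoneOn hyI (hG.inv.mapsTo hvkI) h3
          rwa [Equiv.Perm.coe_inv, Equiv.apply_symm_apply] at h4
        have hFz : F z = z := ih z hz1 hz2
        have h5 : G (F y) = G y := by
          rw [hcomm y]
          exact hFz
        exact G.injective h5
  -- coverage of the interior
  have hinterior : ∀ y ∈ Set.Ioo (0:ℝ) 1, F y = y := by
    intro y hy
    rcases le_or_gt y a with hya | hya
    · have htd : Filter.Tendsto (fun j => (⇑G)^[j] (G a)) Filter.atTop (𝓝 0) :=
        hG.tendsto_iter_zero hGlt hGa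
      obtain ⟨j, hj⟩ := (htd.eventually_lt_const hy.1).exists
      exact hdown j y hj.le hya
    · have htu : Filter.Tendsto (fun k => (⇑G.symm)^[k] a) Filter.atTop (𝓝 1) := by
        have : ⇑G.symm = ⇑(G⁻¹) := rfl
        rw [this]
        exact hG.inv.tendsto_iter_one (by
          intro x hx
          exact hGgt x hx) ha
      obtain ⟨k, hk⟩ := (htu.eventually_const_lt hy.2).exists
      exact hup k y (le_trans hGa_lt.le hya.le) hk.le
  intro y
  by_cases hyI : y ∈ I
  · rcases eq_or_lt_of_le hyI.1 with h0 | h0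
    · rw [← h0]; exact hF.fix0
    · rcases eq_or_lt_of_le hyI.2 with h1 | h1
      · rw [h1]; exact hF.fix1
      · exact hinterior y ⟨h0, h1⟩
  · exact hF.2.2.2.2 y hyI

lemma sign_dichotomy (g : Equiv.Perm ℝ) (hgc : ContinuousOn ⇑g I)
    (hfree : ∀ x ∈ Set.Ioo (0:ℝ) 1, g x ≠ x) :
    (∀ x ∈ Set.Ioo (0:ℝ) 1, g x < x) ∨ (∀ x ∈ Set.Ioo (0:ℝ) 1, x < g x) := by
  have hφc : ContinuousOn (fun y => g y - y) I := hgc.sub continuousOn_id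
  have key : ∀ x ∈ Set.Ioo (0:ℝ) 1, ∀ y ∈ Set.Ioo (0:ℝ) 1, g x < x → g y < y := by
    intro x hx y hy hgx
    by_contra hgy
    push_neg at hgy
    have hgy' : y < g y := lt_of_le_of_ne hgy (Ne.symm (hfree y hy))
    have hsub : Set.uIcc x y ⊆ Set.Ioo (0:ℝ) 1 := Set.ordConnected_Ioo.uIcc_subset hx hy
    have hsubI : Set.uIcc x y ⊆ I := fun z hz => Set.mem_Icc_of_Ioo (hsub hz)
    have h0 : (0:ℝ) ∈ Set.uIcc (g x - x) (g y - y) :=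
      Set.mem_uIcc.2 (Or.inl ⟨by linarith, by linarith⟩)
    obtain ⟨z, hz, hz0⟩ := intermediate_value_uIcc (hφc.mono hsubI) h0
    have hz0' : g z = z := by
      have : g z - z = 0 := hz0
      linarith
    exact hfree z (hsub hz) hz0'
  rcases lt_or_gt_of_ne (hfree (1/2) (by norm_num)) with hlt | hgt
  · exact Or.inl fun x hx => key (1/2) (by norm_num) x hx hlt
  · right
    intro x hx
    by_contra hge
    push_neg at hge
    have : g x < x := lt_of_le_of_ne hge (hfree x hx)
    exact absurd (key x hx (1/2) (by norm_num) this) (not_lt.2 hgt.le)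


/-- Corollary 5.1: if g is an orientation-preserving C² diffeomorphism of [0,1] with no
fixed point in (0,1), then g and g² have the same centralizer in Diff₊²([0,1]). -/
theorem centralizer_sq_eq_centralizer_Icc (g : Equiv.Perm ℝ) (hg : IsIccDiff g)
    (hfree : ∀ x ∈ Set.Ioo (0:ℝ) 1, g x ≠ x) :
    ∀ h : Equiv.Perm ℝ, IsIccDiff h → (Commute g h ↔ Commute (g * g) h) := by
  intro h hh
  constructor
  · intro hc; exact hc.mul_left hc
  · intro hc
    set t : Equiv.Perm ℝ := h * g * h⁻¹ with ht
    set f : Equiv.Perm ℝ := g⁻¹ * t with hf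
    have hT : IsIccDiff t := (hh.mul hg).mul hh.inv
    have hfD : IsIccDiff f := hg.inv.mul hT
    have htt : t * t = g * g := by
      rw [ht]
      have h1 : (h * g * h⁻¹) * (h * g * h⁻¹) = h * (g * g) * h⁻¹ := by group
      rw [h1, ← hc.eq, mul_inv_cancel_right]
    have hgg : Commute (g * g) g := (Commute.refl g).mul_left (Commute.refl g)
    have hct : Commute (g * g) t := (hc.mul_right hgg).mul_right hc.inv_right
    have hcf : Commute (g * g) f := hgg.inv_right.mul_right hct
    -- the auxiliary identity t⁻¹ * g = g * f * g⁻¹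
    have hid : t⁻¹ * g = g * f * g⁻¹ := by
      calc t⁻¹ * g = t⁻¹ * (g * g) * g⁻¹ := by group
        _ = t⁻¹ * (t * t) * g⁻¹ := by rw [htt]
        _ = t * g⁻¹ := by group
        _ = g * f * g⁻¹ := by rw [hf]; group
    -- existence of an interior fixed point of f
    have hex : ∃ a ∈ Set.Ioo (0:ℝ) 1, f a = a := by
      by_contra hno
      push_neg at hno
      have h12 : (1/2 : ℝ) ∈ Set.Ioo (0:ℝ) 1 := by norm_num
      have hgs : ∀ x ∈ Set.Ioo (0:ℝ) 1, x < g x → g x ≤ x → False := fun _ _ a b => absurd a (not_lt.2 b)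
      rcases sign_dichotomy f hfD.1.continuousOn hno with hfneg | hfpos
      · -- f < id everywhere: then t < g and g < t, contradiction
        have ht_lt : ∀ x ∈ Set.Ioo (0:ℝ) 1, t x < g x := by
          intro x hx
          have h1 : f x < x := hfneg x hx
          have h2 : f x = g⁻¹ (t x) := rfl
          have htx : t x ∈ Set.Ioo (0:ℝ) 1 := hT.mapsToIoo hx
          have h3 := hg.2.2.2.1 (Set.mem_Icc_of_Ioo (hg.inv.mapsToIoo htx))
            (Set.mem_Icc_of_Ioo hx) (by rw [← h2]; exact h1)
          rwa [Equiv.Perm.coe_inv, Equiv.apply_symm_apply] at h3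
        have ht_gt : ∀ y ∈ Set.Ioo (0:ℝ) 1, g y < t y := by
          intro y hy
          have hsy : g⁻¹ y ∈ Set.Ioo (0:ℝ) 1 := hg.inv.mapsToIoo hy
          have h1 : f (g⁻¹ y) < g⁻¹ y := hfneg _ hsy
          have h2 : (t⁻¹ * g) y < y := by
            rw [hid]
            show g (f (g⁻¹ y)) < y
            have := hg.2.2.2.1 (Set.mem_Icc_of_Ioo (hfD.mapsToIoo hsy))
              (Set.mem_Icc_of_Ioo hsy) h1
            rwa [Equiv.Perm.coe_inv, Equiv.apply_symm_apply] at this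
          have h3 : t⁻¹ (g y) < y := h2
          have h4 := hT.2.2.2.1 (Set.mem_Icc_of_Ioo (hT.inv.mapsToIoo (hg.mapsToIoo hy)))
            (Set.mem_Icc_of_Ioo hy) h3
          rwa [Equiv.Perm.coe_inv, Equiv.apply_symm_apply] at h4
        exact absurd (ht_lt _ h12) (not_lt.2 (ht_gt _ h12).le)
      · have ht_gt : ∀ x ∈ Set.Ioo (0:ℝ) 1, g x < t x := by
          intro x hx
          have h1 : x < f x := hfpos x hx
          have h2 : f x = g⁻¹ (t x) := rfl
          have htx : t x ∈ Set.Ioo (0:ℝ) 1 := hT.mapsToIoo hx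
          have h3 := hg.2.2.2.1 (Set.mem_Icc_of_Ioo hx)
            (Set.mem_Icc_of_Ioo (hg.inv.mapsToIoo htx)) (by rw [← h2]; exact h1)
          rwa [Equiv.Perm.coe_inv, Equiv.apply_symm_apply] at h3
        have ht_lt : ∀ y ∈ Set.Ioo (0:ℝ) 1, t y < g y := by
          intro y hy
          have hsy : g⁻¹ y ∈ Set.Ioo (0:ℝ) 1 := hg.inv.mapsToIoo hy
          have h1 : g⁻¹ y < f (g⁻¹ y) := hfpos _ hsy
          have h2 : y < (t⁻¹ * g) y := by
            rw [hid]
            show y < g (f (g⁻¹ y))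
            have := hg.2.2.2.1 (Set.mem_Icc_of_Ioo hsy)
              (Set.mem_Icc_of_Ioo (hfD.mapsToIoo hsy)) h1
            rwa [Equiv.Perm.coe_inv, Equiv.apply_symm_apply] at this
          have h3 : y < t⁻¹ (g y) := h2
          have h4 := hT.2.2.2.1 (Set.mem_Icc_of_Ioo hy)
            (Set.mem_Icc_of_Ioo (hT.inv.mapsToIoo (hg.mapsToIoo hy))) h3
          rwa [Equiv.Perm.coe_inv, Equiv.apply_symm_apply] at h4
        exact absurd (ht_lt _ h12) (not_lt.2 (ht_gt _ h12).le)
    obtain ⟨a, haIoo, hfa⟩ := hex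
    -- pick the contracting direction
    have hall : ∀ y : ℝ, f y = y := by
      rcases sign_dichotomy g hg.1.continuousOn hfree with hgneg | hgpos
      · have hGD : IsIccDiff (g * g) := hg.mul hg
        have hGlt : ∀ x ∈ Set.Ioo (0:ℝ) 1, (g * g) x < x := by
          intro x hx
          have h1 : g x ∈ Set.Ioo (0:ℝ) 1 := hg.mapsToIoo hx
          calc (g * g) x = g (g x) := rfl
            _ < g x := hgneg _ h1
            _ < x := hgneg _ hx
        have hcomm : ∀ x : ℝ, (g * g) (f x) = f ((g * g) x) := fun x =>
          DFunLike.congr_fun hcf.eq x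
        exact kopell (g * g) f hGD hfD hGlt hcomm haIoo hfa
      · have hGD : IsIccDiff ((g * g)⁻¹) := (hg.mul hg).inv
        have hGlt : ∀ x ∈ Set.Ioo (0:ℝ) 1, (g * g)⁻¹ x < x := by
          intro x hx
          have hsx : g⁻¹ x < x := by
            have := hgpos _ (hg.inv.mapsToIoo hx)
            rwa [Equiv.Perm.coe_inv, Equiv.apply_symm_apply] at this
          have hsx' : g⁻¹ x ∈ Set.Ioo (0:ℝ) 1 := hg.inv.mapsToIoo hx
          have hssx : g⁻¹ (g⁻¹ x) < g⁻¹ x := by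
            have := hgpos _ (hg.inv.mapsToIoo hsx')
            rwa [Equiv.Perm.coe_inv, Equiv.apply_symm_apply] at this
          calc (g * g)⁻¹ x = g⁻¹ (g⁻¹ x) := by rw [mul_inv_rev]; rfl
            _ < g⁻¹ x := hssx
            _ < x := hsx
        have hcomm : ∀ x : ℝ, (g * g)⁻¹ (f x) = f ((g * g)⁻¹ x) := fun x =>
          DFunLike.congr_fun hcf.inv_left.eq x
        exact kopell ((g * g)⁻¹) f hGD hfD hGlt hcomm haIoo hfa
    have hf1 : f = 1 := Equiv.ext fun y => hall y
    have htg : t = g := by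
      rw [hf] at hf1
      exact (inv_mul_eq_one.mp hf1).symm
    have h2 : h * g * h⁻¹ = g := by rw [← ht]; exact htg
    show g * h = h * g
    calc g * h = (h * g * h⁻¹) * h := by rw [h2]
      _ = h * g := by group
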